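/- arXiv:1702.00121 — 3 statements merged into one kernel-verified Lean document; each statement's English description precedes it below -/
import Mathlib

section
/- Let ℓ be an odd prime. Consider the set S of indices [GL₂(ℤ/ℓℤ) : G] over subgroups G of GL₂(ℤ/ℓℤ) such that some twist of G fixes a nonzero vector of (ℤ/ℓℤ)². Then (ℓ²−1)/2 belongs to S, and every element of S is divisible by (ℓ²−1)/2; that is, the set of div-minimal elements of S is {(ℓ²−1)/2}. -/
open Matrix

abbrev GL2 (ℓ : ℕ) : Type := GL (Fin 2) (ZMod ℓ)

namespace Paper

/-- The underlying matrix of an element of `GL₂(ℤ/ℓℤ)`. -/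
def mat {ℓ : ℕ} (g : GL2 ℓ) : Matrix (Fin 2) (Fin 2) (ZMod ℓ) := ↑g

/-- The set of scalar matrices `Z(ℓ)`. -/
def ZSet (ℓ : ℕ) : Set (GL2 ℓ) :=
  { g | ∃ x : ZMod ℓ, mat g = x • (1 : Matrix (Fin 2) (Fin 2) (ZMod ℓ)) }

/-- The split Cartan `C_s(ℓ)`: invertible diagonal matrices. -/
def CsSet (ℓ : ℕ) : Set (GL2 ℓ) := { g | mat g 0 1 = 0 ∧ mat g 1 0 = 0 }

/-- The normalizer `N_s(ℓ)` of the split Cartan: diagonal and antidiagonal matrices. -/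
def NsSet (ℓ : ℕ) : Set (GL2 ℓ) :=
  CsSet ℓ ∪ { g | mat g 0 0 = 0 ∧ mat g 1 1 = 0 }

/-- The nonsplit Cartan `C_ns(ℓ)` relative to the nonsquare `ε`. -/
def CnsSet (ℓ : ℕ) (ε : ZMod ℓ) : Set (GL2 ℓ) :=
  { g | ∃ x y : ZMod ℓ, mat g = !![x, ε * y; y, x] }

/-- The normalizer `N_ns(ℓ)` of the nonsplit Cartan. -/
def NnsSet (ℓ : ℕ) (ε : ZMod ℓ) : Set (GL2 ℓ) :=
  CnsSet ℓ ε ∪ { g | ∃ x y : ZMod ℓ, mat g = !![x, -(ε * y); y, -x] }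

/-- The ramified Cartan `C_r(ℓ)`. -/
def CrSet (ℓ : ℕ) : Set (GL2 ℓ) :=
  { g | mat g 1 0 = 0 ∧ mat g 0 0 = mat g 1 1 }

/-- The Borel subgroup `B(ℓ)`: upper triangular matrices. -/
def BorelSet (ℓ : ℕ) : Set (GL2 ℓ) := { g | mat g 1 0 = 0 }

/-- `G` is conjugate in `GL₂(ℤ/ℓℤ)` to a subgroup of the set `M`. -/
def ConjSub {ℓ : ℕ} (G : Subgroup (GL2 ℓ)) (M : Set (GL2 ℓ)) : Prop :=
  ∃ a : GL2 ℓ, ∀ g ∈ G, a * g * a⁻¹ ∈ M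

/-- `G` belongs to `Z(ℓ)`. -/
def BelongsZ {ℓ : ℕ} (G : Subgroup (GL2 ℓ)) : Prop := ConjSub G (ZSet ℓ)

/-- `G` belongs to `C_s(ℓ)`. -/
def BelongsCs {ℓ : ℕ} (G : Subgroup (GL2 ℓ)) : Prop :=
  ConjSub G (CsSet ℓ) ∧ ¬ ConjSub G (ZSet ℓ)

/-- `G` belongs to `C_ns(ℓ)`. -/
def BelongsCns {ℓ : ℕ} (ε : ZMod ℓ) (G : Subgroup (GL2 ℓ)) : Prop :=
  ConjSub G (CnsSet ℓ ε) ∧ ¬ ConjSub G (ZSet ℓ)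

/-- `G` belongs to `N_s(ℓ)`. -/
def BelongsNs {ℓ : ℕ} (G : Subgroup (GL2 ℓ)) : Prop :=
  ConjSub G (NsSet ℓ) ∧ ¬ ConjSub G (CsSet ℓ)

/-- `G` belongs to `N_ns(ℓ)`. -/
def BelongsNns {ℓ : ℕ} (ε : ZMod ℓ) (G : Subgroup (GL2 ℓ)) : Prop :=
  ConjSub G (NnsSet ℓ ε) ∧ ¬ ConjSub G (CnsSet ℓ ε)

/-- `G` belongs to the ramified Cartan `C_r(ℓ)`. -/
def BelongsCr {ℓ : ℕ} (G : Subgroup (GL2 ℓ)) : Prop :=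
  ConjSub G (CrSet ℓ) ∧ ¬ ConjSub G (ZSet ℓ)

/-- `H` is a twist of `G`: either `H = ⟨G, -I⟩`, or `H` is an index-2 subgroup of
`⟨G, -I⟩` not containing `-I`. -/
def TwistOf {ℓ : ℕ} (G H : Subgroup (GL2 ℓ)) : Prop :=
  H = G ⊔ Subgroup.closure {(-1 : GL2 ℓ)} ∨
    (H ≤ G ⊔ Subgroup.closure {(-1 : GL2 ℓ)} ∧
      H.relIndex (G ⊔ Subgroup.closure {(-1 : GL2 ℓ)}) = 2 ∧
      (-1 : GL2 ℓ) ∉ H)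

/-- `H` fixes a nonzero vector of `(ℤ/ℓℤ)²`. -/
def FixesVec {ℓ : ℕ} (H : Subgroup (GL2 ℓ)) : Prop :=
  ∃ v : Fin 2 → ZMod ℓ, v ≠ 0 ∧ ∀ h ∈ H, Matrix.mulVec (mat h) v = v

end Paper

namespace Aux

open Paper Matrix

variable {ℓ : ℕ}

lemma mat_mul (g h : GL2 ℓ) : mat (g * h) = mat g * mat h := rfl

lemma mat_valinv (g : GL2 ℓ) : mat g * mat g⁻¹ = 1 := g.mul_inv

lemma mat_invval (g : GL2 ℓ) : mat g⁻¹ * mat g = 1 := g.inv_mul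

lemma mul_apply' (A B : Matrix (Fin 2) (Fin 2) (ZMod ℓ)) (i j : Fin 2) :
    (A * B) i j = A i 0 * B 0 j + A i 1 * B 1 j := by
  rw [Matrix.mul_apply, Fin.sum_univ_two]

lemma inv_entries {g : GL2 ℓ} (h10 : mat g 1 0 = 0) :
    mat g⁻¹ 1 0 = 0 ∧ mat g 1 1 * mat g⁻¹ 1 1 = 1 ∧ mat g⁻¹ 0 0 * mat g 0 0 = 1 := by
  have e11 : mat g 1 0 * mat g⁻¹ 0 1 + mat g 1 1 * mat g⁻¹ 1 1 = 1 := by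
    have := congrFun (congrFun (mat_valinv g) 1) 1
    rwa [mul_apply'] at this
  rw [h10, zero_mul, zero_add] at e11
  have e10 : mat g 1 0 * mat g⁻¹ 0 0 + mat g 1 1 * mat g⁻¹ 1 0 = 0 := by
    have := congrFun (congrFun (mat_valinv g) 1) 0
    rwa [mul_apply'] at this
  rw [h10, zero_mul, zero_add] at e10
  have hM10 : mat g⁻¹ 1 0 = 0 := by
    calc mat g⁻¹ 1 0 = (mat g 1 1 * mat g⁻¹ 1 1) * mat g⁻¹ 1 0 := by rw [e11, one_mul]
    _ = mat g⁻¹ 1 1 * (mat g 1 1 * mat g⁻¹ 1 0) := by ring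
    _ = 0 := by rw [e10, mul_zero]
  have e00 : mat g⁻¹ 0 0 * mat g 0 0 + mat g⁻¹ 0 1 * mat g 1 0 = 1 := by
    have := congrFun (congrFun (mat_invval g) 0) 0
    rwa [mul_apply'] at this
  rw [h10, mul_zero, add_zero] at e00
  exact ⟨hM10, e11, e00⟩

/-- The stabilizer of `![1,0]`. -/
def Stab (ℓ : ℕ) : Subgroup (GL2 ℓ) where
  carrier := {g | mat g 1 0 = 0 ∧ mat g 0 0 = 1}
  one_mem' := by
    constructor <;> simp [Paper.mat]
  mul_mem' := by
    rintro a b ⟨ha1, ha2⟩ ⟨hb1, hb2⟩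
    constructor
    · show mat (a * b) 1 0 = 0
      rw [mat_mul, mul_apply', ha1, hb1]; ring
    · show mat (a * b) 0 0 = 1
      rw [mat_mul, mul_apply', ha2, hb1, hb2]; ring
  inv_mem' := by
    rintro a ⟨h1, h2⟩
    obtain ⟨i1, _, i3⟩ := inv_entries h1
    refine ⟨i1, ?_⟩
    rwa [h2, mul_one] at i3

/-- Upper triangular matrices with `a^2 = 1` in the corner. -/
def Gdef (ℓ : ℕ) : Subgroup (GL2 ℓ) where
  carrier := {g | mat g 1 0 = 0 ∧ mat g 0 0 ^ 2 = 1}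
  one_mem' := by
    constructor <;> simp [Paper.mat]
  mul_mem' := by
    rintro a b ⟨ha1, ha2⟩ ⟨hb1, hb2⟩
    constructor
    · show mat (a * b) 1 0 = 0
      rw [mat_mul, mul_apply', ha1, hb1]; ring
    · show mat (a * b) 0 0 ^ 2 = 1
      rw [mat_mul, mul_apply', hb1, mul_zero, add_zero, mul_pow, ha2, hb2, mul_one]
  inv_mem' := by
    rintro a ⟨h1, h2⟩
    obtain ⟨i1, _, i3⟩ := inv_entries h1
    refine ⟨i1, ?_⟩
    calc mat a⁻¹ 0 0 ^ 2 = mat a⁻¹ 0 0 ^ 2 * mat a 0 0 ^ 2 := by rw [h2, mul_one]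
    _ = (mat a⁻¹ 0 0 * mat a 0 0) ^ 2 := by ring
    _ = 1 := by rw [i3, one_pow]

lemma mem_Stab {g : GL2 ℓ} : g ∈ Stab ℓ ↔ mat g 1 0 = 0 ∧ mat g 0 0 = 1 := Iff.rfl

lemma mem_Gdef {g : GL2 ℓ} : g ∈ Gdef ℓ ↔ mat g 1 0 = 0 ∧ mat g 0 0 ^ 2 = 1 := Iff.rfl

lemma Stab_le_Gdef : Stab ℓ ≤ Gdef ℓ := by
  rintro g ⟨h1, h2⟩
  exact ⟨h1, by rw [h2, one_pow]⟩

/-- Explicit invertible upper triangular matrix. -/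
def upperUnit (a b : ZMod ℓ) (d : (ZMod ℓ)ˣ) (ha : a ^ 2 = 1) : GL2 ℓ where
  val := !![a, b; 0, (d : ZMod ℓ)]
  inv := !![a, -(a * b * ((d⁻¹ : (ZMod ℓ)ˣ) : ZMod ℓ)); 0, ((d⁻¹ : (ZMod ℓ)ˣ) : ZMod ℓ)]
  val_inv := by
    have ha' : a * a = 1 := by rw [← sq]; exact ha
    have hd : (d : ZMod ℓ) * ((d⁻¹ : (ZMod ℓ)ˣ) : ZMod ℓ) = 1 := d.mul_inv
    ext i j
    fin_cases i <;> fin_cases j <;>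
      simp [mul_apply', Matrix.one_apply] <;>
      first
        | linear_combination ha'
        | linear_combination hd
        | linear_combination (-(b * ((d⁻¹ : (ZMod ℓ)ˣ) : ZMod ℓ))) * ha'
        | linear_combination (-(a * b)) * hd
  inv_val := by
    have ha' : a * a = 1 := by rw [← sq]; exact ha
    have hd : ((d⁻¹ : (ZMod ℓ)ˣ) : ZMod ℓ) * (d : ZMod ℓ) = 1 := d.inv_mul
    ext i j
    fin_cases i <;> fin_cases j <;>
      simp [mul_apply', Matrix.one_apply] <;>
      first
        | linear_combination ha'
        | linear_combination hd
        | linear_combination (-(b * ((d⁻¹ : (ZMod ℓ)ˣ) : ZMod ℓ))) * ha'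
        | linear_combination (-(a * b)) * hd

lemma mat_upperUnit (a b : ZMod ℓ) (d : (ZMod ℓ)ˣ) (ha : a ^ 2 = 1) :
    mat (upperUnit a b d ha) = !![a, b; 0, (d : ZMod ℓ)] := rfl

/-- `Gdef` is equivalent to triples. -/
noncomputable def gEquiv (ℓ : ℕ) :
    Gdef ℓ ≃ ({a : ZMod ℓ // a ^ 2 = 1} × ZMod ℓ × (ZMod ℓ)ˣ) where
  toFun g := ⟨⟨mat g.1 0 0, g.2.2⟩, mat g.1 0 1,
    ⟨mat g.1 1 1, mat g.1⁻¹ 1 1, (inv_entries g.2.1).2.1,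
      by rw [mul_comm]; exact (inv_entries g.2.1).2.1⟩⟩
  invFun x := ⟨upperUnit x.1.1 x.2.1 x.2.2 x.1.2, by
    rw [mem_Gdef, mat_upperUnit]
    refine ⟨by simp, ?_⟩
    simpa using x.1.2⟩
  left_inv g := by
    apply Subtype.ext
    apply Units.ext
    show !![mat g.1 0 0, mat g.1 0 1; 0, mat g.1 1 1] = (g.1 : Matrix (Fin 2) (Fin 2) (ZMod ℓ))
    conv_rhs => rw [Matrix.eta_fin_two (g.1 : Matrix (Fin 2) (Fin 2) (ZMod ℓ))]
    rw [show (g.1 : Matrix (Fin 2) (Fin 2) (ZMod ℓ)) 1 0 = 0 from g.2.1]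
    rfl
  right_inv x := by
    refine Prod.ext (Subtype.ext ?_) (Prod.ext ?_ (Units.ext ?_)) <;>
      simp [mat_upperUnit]

/-- `Stab` is equivalent to pairs. -/
noncomputable def sEquiv (ℓ : ℕ) : Stab ℓ ≃ (ZMod ℓ × (ZMod ℓ)ˣ) where
  toFun g := ⟨mat g.1 0 1,
    ⟨mat g.1 1 1, mat g.1⁻¹ 1 1, (inv_entries g.2.1).2.1,
      by rw [mul_comm]; exact (inv_entries g.2.1).2.1⟩⟩
  invFun x := ⟨upperUnit 1 x.1 x.2 (one_pow 2), by
    rw [mem_Stab, mat_upperUnit]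
    exact ⟨by simp, by simp⟩⟩
  left_inv g := by
    apply Subtype.ext
    apply Units.ext
    show !![(1 : ZMod ℓ), mat g.1 0 1; 0, mat g.1 1 1] = (g.1 : Matrix (Fin 2) (Fin 2) (ZMod ℓ))
    conv_rhs => rw [Matrix.eta_fin_two (g.1 : Matrix (Fin 2) (Fin 2) (ZMod ℓ))]
    rw [show (g.1 : Matrix (Fin 2) (Fin 2) (ZMod ℓ)) 1 0 = 0 from g.2.1,
      show (g.1 : Matrix (Fin 2) (Fin 2) (ZMod ℓ)) 0 0 = 1 from g.2.2]
    rfl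
  right_inv x := by
    refine Prod.ext ?_ (Units.ext ?_) <;> simp [mat_upperUnit]

section prime

variable [hp : Fact (Nat.Prime ℓ)]

instance : NeZero ℓ := ⟨hp.out.ne_zero⟩

lemma card_Stab : Nat.card (Stab ℓ) = ℓ * (ℓ - 1) := by
  rw [Nat.card_congr (sEquiv ℓ), Nat.card_prod, Nat.card_eq_fintype_card,
    Nat.card_eq_fintype_card, ZMod.card, ZMod.card_units]

lemma card_sqrt (h : (-1 : ZMod ℓ) ≠ 1) : Nat.card {a : ZMod ℓ // a ^ 2 = 1} = 2 := by
  have hs : {a : ZMod ℓ | a ^ 2 = 1} = {1, -1} := by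
    ext a; simp [sq_eq_one_iff]
  have : Nat.card {a : ZMod ℓ // a ^ 2 = 1} = ({a : ZMod ℓ | a ^ 2 = 1} : Set _).ncard :=
    Nat.card_coe_set_eq _
  rw [this, hs, Set.ncard_pair h.symm]

lemma card_Gdef (h : (-1 : ZMod ℓ) ≠ 1) : Nat.card (Gdef ℓ) = 2 * (ℓ * (ℓ - 1)) := by
  rw [Nat.card_congr (gEquiv ℓ), Nat.card_prod, Nat.card_prod, card_sqrt h,
    Nat.card_eq_fintype_card, Nat.card_eq_fintype_card, ZMod.card, ZMod.card_units]

lemma card_GL2 : Nat.card (GL2 ℓ) = (ℓ ^ 2 - 1) * (ℓ ^ 2 - ℓ) := by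
  rw [Matrix.card_GL_field, Fin.prod_univ_two, ZMod.card]
  norm_num

lemma sub_helper : ℓ ^ 2 - ℓ = ℓ * (ℓ - 1) := by
  rw [Nat.mul_sub, sq, mul_one]

lemma index_Stab : (Stab ℓ).index = ℓ ^ 2 - 1 := by
  have h := Subgroup.card_mul_index (Stab ℓ)
  rw [card_Stab, card_GL2, sub_helper, mul_comm ((ℓ:ℕ) ^ 2 - 1)] at h
  have hpos : 0 < ℓ * (ℓ - 1) := by
    have h2 : 2 ≤ ℓ := hp.out.two_le
    exact Nat.mul_pos (by omega) (by omega)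
  exact Nat.eq_of_mul_eq_mul_left hpos h

lemma index_Gdef (h : (-1 : ZMod ℓ) ≠ 1) (m : ℕ) (hm : ℓ ^ 2 - 1 = 2 * m) :
    (Gdef ℓ).index = m := by
  have h1 := Subgroup.card_mul_index (Gdef ℓ)
  rw [card_Gdef h, card_GL2, sub_helper, hm] at h1
  have hpos : 0 < 2 * (ℓ * (ℓ - 1)) := by
    have h2 : 2 ≤ ℓ := hp.out.two_le
    exact Nat.mul_pos (by omega) (Nat.mul_pos (by omega) (by omega))
  apply Nat.eq_of_mul_eq_mul_left hpos
  rw [h1]; ring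

lemma stab_fix {g : GL2 ℓ} : g ∈ Stab ℓ ↔ (mat g).mulVec ![1, 0] = ![1, 0] := by
  have key : (mat g).mulVec ![1, 0] = ![mat g 0 0, mat g 1 0] := by
    funext i
    fin_cases i <;> simp [Matrix.mulVec, dotProduct, Fin.sum_univ_two]
  rw [mem_Stab, key]
  constructor
  · rintro ⟨h1, h2⟩
    funext i; fin_cases i <;> simp [h1, h2]
  · intro h
    constructor
    · have := congrFun h 1; simpa using this
    · have := congrFun h 0; simpa using this

lemma exists_conj {v : Fin 2 → ZMod ℓ} (hv : v ≠ 0) :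
    ∃ a : GL2 ℓ, (mat a).mulVec ![1, 0] = v := by
  by_cases h0 : v 0 = 0
  · have h1 : v 1 ≠ 0 := by
      intro h1
      exact hv (funext fun i => by fin_cases i <;> simpa)
    refine ⟨⟨!![0, 1; v 1, 0], !![0, (v 1)⁻¹; 1, 0], ?_, ?_⟩, ?_⟩
    · ext i j
      fin_cases i <;> fin_cases j <;>
        simp [mul_apply', Matrix.one_apply, mul_inv_cancel₀ h1]
    · ext i j
      fin_cases i <;> fin_cases j <;>
        simp [mul_apply', Matrix.one_apply, inv_mul_cancel₀ h1]
    · show Matrix.mulVec !![0, 1; v 1, 0] ![1, 0] = v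
      funext i
      fin_cases i <;>
        simp [Matrix.mulVec, dotProduct, Fin.sum_univ_two, h0]
  · refine ⟨⟨!![v 0, 0; v 1, 1], !![(v 0)⁻¹, 0; -(v 1) * (v 0)⁻¹, 1], ?_, ?_⟩, ?_⟩
    · ext i j
      fin_cases i <;> fin_cases j <;>
        simp [mul_apply', Matrix.one_apply, mul_inv_cancel₀ h0] <;>
        first
          | linear_combination (v 1) * mul_inv_cancel₀ h0
          | linear_combination -(v 1) * mul_inv_cancel₀ h0
    · ext i j
      fin_cases i <;> fin_cases j <;>
        simp [mul_apply', Matrix.one_apply, inv_mul_cancel₀ h0] <;>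
        first
          | linear_combination (v 1) * inv_mul_cancel₀ h0
          | linear_combination -(v 1) * inv_mul_cancel₀ h0
    · show Matrix.mulVec !![v 0, 0; v 1, 1] ![1, 0] = v
      funext i
      fin_cases i <;>
        simp [Matrix.mulVec, dotProduct, Fin.sum_univ_two]

lemma dvd_of_fixes (H : Subgroup (GL2 ℓ)) (hH : Paper.FixesVec H) :
    (ℓ ^ 2 - 1) ∣ H.index := by
  obtain ⟨v, hv, hfix⟩ := hH
  obtain ⟨a, ha⟩ := exists_conj hv
  set K := (Stab ℓ).map (MulAut.conj a).toMonoidHom with hK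
  have hKi : K.index = (Stab ℓ).index := by
    have hsurj : Function.Surjective ((MulAut.conj a).toMonoidHom : GL2 ℓ →* GL2 ℓ) :=
      (MulAut.conj a).surjective
    have hker : ((MulAut.conj a).toMonoidHom : GL2 ℓ →* GL2 ℓ).ker = ⊥ :=
      (MonoidHom.ker_eq_bot_iff _).mpr (MulAut.conj a).injective
    exact Subgroup.index_map_eq (hf1 := hsurj) (hf2 := by rw [hker]; exact bot_le)
  have hle : H ≤ K := by
    intro h hh
    rw [hK, Subgroup.mem_map_equiv, MulAut.conj_symm_apply, stab_fix]
    have hmm : mat (a⁻¹ * h * a) = mat a⁻¹ * (mat h * mat a) := by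
      rw [mat_mul, mat_mul, mul_assoc]
    rw [hmm, ← Matrix.mulVec_mulVec, ← Matrix.mulVec_mulVec, ha, hfix h hh, ← ha,
      Matrix.mulVec_mulVec, mat_invval, Matrix.one_mulVec]
  calc (ℓ ^ 2 - 1) = K.index := by rw [hKi, index_Stab]
  _ ∣ H.index := Subgroup.index_dvd_of_le hle

end prime

end Aux

theorem statement_17 (ℓ : ℕ) (hℓ : Nat.Prime ℓ) (hodd : Odd ℓ) :
    (∃ G H : Subgroup (GL2 ℓ), Paper.TwistOf G H ∧ Paper.FixesVec H ∧
      G.index = (ℓ ^ 2 - 1) / 2) ∧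
    (∀ G H : Subgroup (GL2 ℓ), Paper.TwistOf G H → Paper.FixesVec H →
      (ℓ ^ 2 - 1) / 2 ∣ G.index) := by
  haveI : Fact (Nat.Prime ℓ) := ⟨hℓ⟩
  have hne2 : ℓ ≠ 2 := by rintro rfl; exact (by decide : ¬ Odd 2) hodd
  have hl3 : 3 ≤ ℓ := by have := hℓ.two_le; omega
  have h2 : ¬ (ℓ ∣ 2) := by
    intro h
    have := Nat.le_of_dvd (by norm_num) h
    omega
  have hneg : (-1 : ZMod ℓ) ≠ 1 := by
    intro h
    have h20 : (2 : ZMod ℓ) = 0 := by linear_combination -h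
    rw [show ((2 : ZMod ℓ)) = ((2 : ℕ) : ZMod ℓ) by norm_cast,
      ZMod.natCast_eq_zero_iff] at h20
    exact h2 h20
  have h2Z : (2 : ZMod ℓ) ≠ 0 := by
    intro h20
    rw [show ((2 : ZMod ℓ)) = ((2 : ℕ) : ZMod ℓ) by norm_cast,
      ZMod.natCast_eq_zero_iff] at h20
    exact h2 h20
  obtain ⟨k, hk⟩ := hodd
  have hk1 : 1 ≤ k := by omega
  have hsq : ℓ ^ 2 = 4 * (k * k) + 4 * k + 1 := by subst hk; ring
  have h4 : ℓ ^ 2 - 1 = 2 * (2 * (k * k) + 2 * k) := by rw [hsq, Nat.add_sub_cancel]; ring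
  set m := (ℓ ^ 2 - 1) / 2 with hmdef
  have hm' : m = 2 * (k * k) + 2 * k := by
    rw [hmdef, h4]; exact Nat.mul_div_cancel_left _ (by norm_num)
  have hm : ℓ ^ 2 - 1 = 2 * m := by rw [hm', h4]
  have hmpos : 0 < m := by
    rw [hm']
    calc 0 < 2 * k := by omega
    _ ≤ 2 * (k * k) + 2 * k := Nat.le_add_left _ _
  have hmat_neg : ∀ i j : Fin 2, Paper.mat (-1 : GL2 ℓ) i j = -(1 : Matrix (Fin 2) (Fin 2) (ZMod ℓ)) i j := by
    intro i j
    show ((-1 : GL2 ℓ) : Matrix (Fin 2) (Fin 2) (ZMod ℓ)) i j = _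
    simp
  have hnegmem : (-1 : GL2 ℓ) ∈ Aux.Gdef ℓ := by
    rw [Aux.mem_Gdef]
    constructor
    · rw [hmat_neg]; simp [Matrix.one_apply]
    · rw [hmat_neg]; simp [Matrix.one_apply]
  have hsup : Aux.Gdef ℓ ⊔ Subgroup.closure {(-1 : GL2 ℓ)} = Aux.Gdef ℓ :=
    sup_eq_left.mpr ((Subgroup.closure_le _).mpr (by simpa using hnegmem))
  constructor
  · refine ⟨Aux.Gdef ℓ, Aux.Stab ℓ, Or.inr ⟨?_, ?_, ?_⟩, ?_, Aux.index_Gdef hneg m hm⟩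
    · rw [hsup]; exact Aux.Stab_le_Gdef
    · rw [hsup]
      have hr := Subgroup.relIndex_mul_index (Aux.Stab_le_Gdef (ℓ := ℓ))
      rw [Aux.index_Gdef hneg m hm, Aux.index_Stab, hm] at hr
      exact Nat.eq_of_mul_eq_mul_right hmpos hr
    · intro hmem
      have h00 : Paper.mat (-1 : GL2 ℓ) 0 0 = 1 := hmem.2
      rw [hmat_neg] at h00
      simp [Matrix.one_apply] at h00
      exact hneg h00
    · exact ⟨![1, 0], by
        intro h
        have := congrFun h 0
        simp at this, fun h hh => Aux.stab_fix.mp hh⟩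
  · intro G H htw hfx
    have hnotH : (-1 : GL2 ℓ) ∉ H := by
      intro hmem
      obtain ⟨v, hv, hfix⟩ := hfx
      have hfv := hfix _ hmem
      have hmv : Matrix.mulVec (Paper.mat (-1 : GL2 ℓ)) v = -v := by
        show Matrix.mulVec ((-1 : GL2 ℓ) : Matrix (Fin 2) (Fin 2) (ZMod ℓ)) v = -v
        simp [Matrix.neg_mulVec]
      rw [hmv] at hfv
      apply hv
      funext i
      have hi := congrFun hfv i
      simp only [Pi.neg_apply] at hi
      have h2v : (2 : ZMod ℓ) * v i = 0 := by linear_combination -hi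
      rcases mul_eq_zero.mp h2v with h | h
      · exact absurd h h2Z
      · simpa using h
    rcases htw with heq | ⟨hle, hrel, _⟩
    · exact absurd (heq ▸ Subgroup.mem_sup_right (Subgroup.subset_closure (Set.mem_singleton _))) hnotH
    · have h1 : 2 * (G ⊔ Subgroup.closure {(-1 : GL2 ℓ)}).index = H.index := by
        rw [← Subgroup.relIndex_mul_index hle, hrel]
      have h2d : (ℓ ^ 2 - 1) ∣ H.index := Aux.dvd_of_fixes H hfx
      rw [← h1, hm] at h2d
      have h3 : m ∣ (G ⊔ Subgroup.closure {(-1 : GL2 ℓ)}).index :=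
        (mul_dvd_mul_iff_left (by norm_num : (2 : ℕ) ≠ 0)).mp h2d
      exact h3.trans (Subgroup.index_dvd_of_le le_sup_left)
end

section
/- Let ℓ be an odd prime. Consider the set S of indices [N_s(ℓ) : G] over subgroups G of N_s(ℓ) such that some twist of G fixes a nonzero vector of (ℤ/ℓℤ)². Then ℓ−1 belongs to S, and every element of S is divisible by ℓ−1; that is, the set of div-minimal elements of S is {ℓ−1}. -/
open Matrix

namespace Aux18
open Paper
variable {ℓ : ℕ}

lemma mat_mul (g h : GL2 ℓ) : mat (g*h) = mat g * mat h := rfl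
lemma mat_one : mat (1 : GL2 ℓ) = 1 := rfl
lemma mat_neg_one : mat (-1 : GL2 ℓ) = -1 := rfl

lemma entry_mul (g h : GL2 ℓ) (i j : Fin 2) :
    mat (g*h) i j = mat g i 0 * mat h 0 j + mat g i 1 * mat h 1 j := by
  simp [mat_mul, Matrix.mul_apply, Fin.sum_univ_two]

lemma entry_mul_inv (g : GL2 ℓ) (i j : Fin 2) :
    mat g i 0 * mat g⁻¹ 0 j + mat g i 1 * mat g⁻¹ 1 j = (1 : Matrix (Fin 2) (Fin 2) (ZMod ℓ)) i j := by
  rw [← entry_mul, mul_inv_cancel, mat_one]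

lemma entry_inv_mul (g : GL2 ℓ) (i j : Fin 2) :
    mat g⁻¹ i 0 * mat g 0 j + mat g⁻¹ i 1 * mat g 1 j = (1 : Matrix (Fin 2) (Fin 2) (ZMod ℓ)) i j := by
  rw [← entry_mul, inv_mul_cancel, mat_one]

/-- inverse of a diagonal elt is diagonal, with reciprocal diagonal entries -/
lemma inv_diag {g : GL2 ℓ} (h01 : mat g 0 1 = 0) (h10 : mat g 1 0 = 0) :
    mat g⁻¹ 0 1 = 0 ∧ mat g⁻¹ 1 0 = 0 ∧ mat g 0 0 * mat g⁻¹ 0 0 = 1 ∧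
      mat g 1 1 * mat g⁻¹ 1 1 = 1 ∧ mat g⁻¹ 0 0 * mat g 0 0 = 1 := by
  have e00 := entry_mul_inv g 0 0
  have e01 := entry_mul_inv g 0 1
  have e10 := entry_mul_inv g 1 0
  have e11 := entry_mul_inv g 1 1
  have f00 := entry_inv_mul g 0 0
  have f10 := entry_inv_mul g 1 0
  simp [h01, h10, Matrix.one_apply] at e00 e01 e10 e11 f00 f10
  have hi10 : mat g⁻¹ 1 0 = 0 := by
    have : mat g⁻¹ 1 0 = (mat g⁻¹ 1 0 * mat g 0 0) * mat g⁻¹ 0 0 := by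
      rw [mul_assoc, e00, mul_one]
    rw [this, f10, zero_mul]
  have hi01 : mat g⁻¹ 0 1 = 0 := by
    have : mat g⁻¹ 0 1 = mat g⁻¹ 0 0 * (mat g 0 0 * mat g⁻¹ 0 1) := by
      rw [← mul_assoc, f00, one_mul]
    rw [this, e01, mul_zero]
  exact ⟨hi01, hi10, e00, e11, f00⟩

/-- the diagonal subgroup -/
def Cs (ℓ : ℕ) : Subgroup (GL2 ℓ) where
  carrier := {g | mat g 0 1 = 0 ∧ mat g 1 0 = 0}
  one_mem' := by constructor <;> simp [mat_one, Matrix.one_apply]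
  mul_mem' := by
    rintro g h ⟨g01, g10⟩ ⟨h01, h10⟩
    constructor <;> rw [entry_mul] <;> simp [g01, g10, h01, h10]
  inv_mem' := by
    rintro g ⟨g01, g10⟩
    exact ⟨(inv_diag g01 g10).1, (inv_diag g01 g10).2.1⟩

/-- the subgroup {diag(a, d) : d² = 1} -/
def Gs (ℓ : ℕ) : Subgroup (GL2 ℓ) where
  carrier := {g | mat g 0 1 = 0 ∧ mat g 1 0 = 0 ∧ mat g 1 1 * mat g 1 1 = 1}
  one_mem' := by refine ⟨?_, ?_, ?_⟩ <;> simp [mat_one, Matrix.one_apply]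
  mul_mem' := by
    rintro g h ⟨g01, g10, g11⟩ ⟨h01, h10, h11⟩
    refine ⟨?_, ?_, ?_⟩ <;> rw [entry_mul] <;> simp [g01, g10, h01, h10]
    calc mat g 1 1 * mat h 1 1 * (mat g 1 1 * mat h 1 1)
        = (mat g 1 1 * mat g 1 1) * (mat h 1 1 * mat h 1 1) := by ring
      _ = 1 := by rw [g11, h11, one_mul]
  inv_mem' := by
    rintro g ⟨g01, g10, g11⟩
    obtain ⟨i01, i10, -, e11, -⟩ := inv_diag g01 g10
    refine ⟨i01, i10, ?_⟩
    have : mat g⁻¹ 1 1 = mat g 1 1 := by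
      have : mat g 1 1 * (mat g 1 1 * mat g⁻¹ 1 1) = mat g 1 1 := by rw [e11, mul_one]
      rw [← mul_assoc, g11, one_mul] at this
      rw [this]
    rw [this, g11]

/-- the subgroup {diag(a, 1)} -/
def Hs (ℓ : ℕ) : Subgroup (GL2 ℓ) where
  carrier := {g | mat g 0 1 = 0 ∧ mat g 1 0 = 0 ∧ mat g 1 1 = 1}
  one_mem' := by refine ⟨?_, ?_, ?_⟩ <;> simp [mat_one, Matrix.one_apply]
  mul_mem' := by
    rintro g h ⟨g01, g10, g11⟩ ⟨h01, h10, h11⟩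
    refine ⟨?_, ?_, ?_⟩ <;> rw [entry_mul] <;> simp [g01, g10, h01, h10, g11, h11]
  inv_mem' := by
    rintro g ⟨g01, g10, g11⟩
    obtain ⟨i01, i10, -, e11, -⟩ := inv_diag g01 g10
    rw [g11, one_mul] at e11
    exact ⟨i01, i10, e11⟩

def diagGL (a b : (ZMod ℓ)ˣ) : GL2 ℓ :=
  ⟨!![(a:ZMod ℓ),0;0,b], !![((a⁻¹:(ZMod ℓ)ˣ):ZMod ℓ),0;0,(b⁻¹:(ZMod ℓ)ˣ)],
    by ext i j; fin_cases i <;> fin_cases j <;>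
      simp [Matrix.mul_apply, Fin.sum_univ_two, Matrix.one_apply],
    by ext i j; fin_cases i <;> fin_cases j <;>
      simp [Matrix.mul_apply, Fin.sum_univ_two, Matrix.one_apply]⟩

lemma mat_diagGL (a b : (ZMod ℓ)ˣ) : mat (diagGL a b) = !![(a:ZMod ℓ),0;0,b] := rfl

def antidiagGL (b c : (ZMod ℓ)ˣ) : GL2 ℓ :=
  ⟨!![0,(b:ZMod ℓ);c,0], !![0,((c⁻¹:(ZMod ℓ)ˣ):ZMod ℓ);(b⁻¹:(ZMod ℓ)ˣ),0],
    by ext i j; fin_cases i <;> fin_cases j <;>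
      simp [Matrix.mul_apply, Fin.sum_univ_two, Matrix.one_apply],
    by ext i j; fin_cases i <;> fin_cases j <;>
      simp [Matrix.mul_apply, Fin.sum_univ_two, Matrix.one_apply]⟩

lemma mat_antidiagGL (b c : (ZMod ℓ)ˣ) : mat (antidiagGL b c) = !![0,(b:ZMod ℓ);c,0] := rfl


section Card
variable [NeZero ℓ]

/-- `Hs` is in bijection with the units. -/
noncomputable def hsEquiv : (Hs ℓ) ≃ (ZMod ℓ)ˣ where
  toFun g := Units.mk (mat (g:GL2 ℓ) 0 0) (mat (g:GL2 ℓ)⁻¹ 0 0)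
    (inv_diag g.2.1 g.2.2.1).2.2.1 (inv_diag g.2.1 g.2.2.1).2.2.2.2
  invFun a := ⟨diagGL a 1, by
    refine ⟨?_, ?_, ?_⟩ <;> simp [mat_diagGL]⟩
  left_inv := by
    rintro ⟨g, h01, h10, h11⟩
    apply Subtype.ext
    apply Units.ext
    show mat (diagGL _ 1) = mat g
    rw [mat_diagGL]
    ext i j
    fin_cases i <;> fin_cases j <;> simp [h01, h10, h11]
  right_inv := by
    intro a
    apply Units.ext
    show mat (diagGL a 1) 0 0 = (a : ZMod ℓ)
    simp [mat_diagGL]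

/-- `Cs` is in bijection with pairs of units. -/
noncomputable def csEquiv : (Cs ℓ) ≃ (ZMod ℓ)ˣ × (ZMod ℓ)ˣ where
  toFun g := ⟨Units.mk (mat (g:GL2 ℓ) 0 0) (mat (g:GL2 ℓ)⁻¹ 0 0)
      (inv_diag g.2.1 g.2.2).2.2.1 (inv_diag g.2.1 g.2.2).2.2.2.2,
    Units.mk (mat (g:GL2 ℓ) 1 1) (mat (g:GL2 ℓ)⁻¹ 1 1)
      (inv_diag g.2.1 g.2.2).2.2.2.1 (by
        have h := inv_diag (g := (g:GL2 ℓ)⁻¹) (inv_diag g.2.1 g.2.2).1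
          (inv_diag g.2.1 g.2.2).2.1
        rw [inv_inv] at h
        exact h.2.2.2.1)⟩
  invFun p := ⟨diagGL p.1 p.2, by constructor <;> simp [mat_diagGL]⟩
  left_inv := by
    rintro ⟨g, h01, h10⟩
    apply Subtype.ext
    apply Units.ext
    show mat (diagGL _ _) = mat g
    rw [mat_diagGL]
    ext i j
    fin_cases i <;> fin_cases j <;> simp [h01, h10]
  right_inv := by
    rintro ⟨a, b⟩
    refine Prod.ext (Units.ext ?_) (Units.ext ?_)
    · show mat (diagGL a b) 0 0 = (a : ZMod ℓ)
      simp [mat_diagGL]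
    · show mat (diagGL a b) 1 1 = (b : ZMod ℓ)
      simp [mat_diagGL]

lemma card_Hs (hp : ℓ.Prime) : Nat.card (Hs ℓ) = ℓ - 1 := by
  haveI : Fact ℓ.Prime := ⟨hp⟩
  rw [Nat.card_congr hsEquiv, Nat.card_eq_fintype_card, ZMod.card_units]

lemma card_Cs (hp : ℓ.Prime) : Nat.card (Cs ℓ) = (ℓ - 1) * (ℓ - 1) := by
  haveI : Fact ℓ.Prime := ⟨hp⟩
  rw [Nat.card_congr csEquiv, Nat.card_eq_fintype_card, Fintype.card_prod, ZMod.card_units]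

end Card

lemma diag_ne_zero [NeZero ℓ] (hl : 1 < ℓ) {g : GL2 ℓ} (h01 : mat g 0 1 = 0)
    (h10 : mat g 1 0 = 0) : mat g 0 0 ≠ 0 := by
  haveI : Fact (1 < ℓ) := ⟨hl⟩
  intro h
  have e := entry_mul_inv g 0 0
  simp [h, h01, Matrix.one_apply] at e

lemma anti_ne_zero [NeZero ℓ] (hl : 1 < ℓ) {g : GL2 ℓ} (h00 : mat g 0 0 = 0)
    (h11 : mat g 1 1 = 0) : mat g 0 1 ≠ 0 ∧ mat g 1 0 ≠ 0 := by
  haveI : Fact (1 < ℓ) := ⟨hl⟩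
  constructor
  · intro h
    have e := entry_mul_inv g 0 0
    simp [h, h00, Matrix.one_apply] at e
  · intro h
    have e := entry_mul_inv g 1 1
    simp [h, h11, Matrix.one_apply] at e

section Ns
variable {Ns : Subgroup (GL2 ℓ)}

lemma mem_Ns_iff (hNs : (Ns : Set (GL2 ℓ)) = Paper.NsSet ℓ) {g : GL2 ℓ} : g ∈ Ns ↔
    (mat g 0 1 = 0 ∧ mat g 1 0 = 0) ∨ (mat g 0 0 = 0 ∧ mat g 1 1 = 0) := by
  rw [← SetLike.mem_coe, hNs]
  rfl

/-- elements of `Ns` with nonzero (0,0)-entry are diagonal -/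
lemma diag_of_mem (hNs : (Ns : Set (GL2 ℓ)) = Paper.NsSet ℓ) {g : GL2 ℓ} (hg : g ∈ Ns) (h : mat g 0 0 ≠ 0) :
    mat g 0 1 = 0 ∧ mat g 1 0 = 0 := by
  rcases (mem_Ns_iff hNs).1 hg with h' | h'
  · exact h'
  · exact absurd h'.1 h

lemma anti_of_mem [NeZero ℓ] (hl : 1 < ℓ) (hNs : (Ns : Set (GL2 ℓ)) = Paper.NsSet ℓ) {g : GL2 ℓ} (hg : g ∈ Ns) (h : mat g 0 0 = 0) :
    mat g 1 1 = 0 := by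
  rcases (mem_Ns_iff hNs).1 hg with h' | h'
  · exact absurd h (diag_ne_zero hl h'.1 h'.2)
  · exact h'.2

/-- the sign character of `Ns` -/
def sgn [NeZero ℓ] (hNs : (Ns : Set (GL2 ℓ)) = Paper.NsSet ℓ) (hp : ℓ.Prime) : Ns →* ℤˣ where
  toFun g := if mat (g : GL2 ℓ) 0 0 = 0 then -1 else 1
  map_one' := by
    haveI : Fact (1 < ℓ) := ⟨hp.one_lt⟩
    show (if mat ((1 : Ns) : GL2 ℓ) 0 0 = 0 then (-1:ℤˣ) else 1) = 1
    rw [if_neg]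
    show ¬ (mat (1 : GL2 ℓ) 0 0 = 0)
    rw [mat_one]
    simp [Matrix.one_apply]
  map_mul' := by
    haveI : Fact ℓ.Prime := ⟨hp⟩
    rintro ⟨g, hg⟩ ⟨h, hh⟩
    show (if mat (g*h) 0 0 = 0 then (-1:ℤˣ) else 1) =
      (if mat g 0 0 = 0 then (-1:ℤˣ) else 1) * (if mat h 0 0 = 0 then (-1:ℤˣ) else 1)
    rw [entry_mul]
    by_cases hg0 : mat g 0 0 = 0
    · have hg11 := anti_of_mem hp.one_lt hNs hg hg0
      by_cases hh0 : mat h 0 0 = 0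
      · have hh11 := anti_of_mem hp.one_lt hNs hh hh0
        rw [if_pos hg0, if_pos hh0, if_neg, neg_one_mul, neg_neg]
        rw [hg0, zero_mul, zero_add]
        exact mul_ne_zero (anti_ne_zero hp.one_lt hg0 hg11).1 (anti_ne_zero hp.one_lt hh0 hh11).2
      · obtain ⟨h01, h10⟩ := diag_of_mem hNs hh hh0
        rw [if_pos, if_pos hg0, if_neg hh0, mul_one]
        rw [hg0, zero_mul, zero_add, h10, mul_zero]
    · obtain ⟨g01, g10⟩ := diag_of_mem hNs hg hg0
      by_cases hh0 : mat h 0 0 = 0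
      · rw [if_pos, if_neg hg0, if_pos hh0, one_mul]
        rw [hh0, mul_zero, zero_add, g01, zero_mul]
      · rw [if_neg, if_neg hg0, if_neg hh0, one_mul]
        rw [g01, zero_mul, add_zero]
        exact mul_ne_zero hg0 hh0

lemma sgn_surjective [NeZero ℓ] (hNs : (Ns : Set (GL2 ℓ)) = Paper.NsSet ℓ) (hp : ℓ.Prime) : Function.Surjective (sgn hNs hp) := by
  intro u
  rcases Int.units_eq_one_or u with rfl | rfl
  · exact ⟨1, (sgn hNs hp).map_one⟩
  · haveI : Fact (1 < ℓ) := ⟨hp.one_lt⟩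
    refine ⟨⟨antidiagGL 1 1, ?_⟩, ?_⟩
    · rw [mem_Ns_iff hNs]
      right
      constructor <;> simp [mat_antidiagGL]
    · show (if mat (antidiagGL (1:(ZMod ℓ)ˣ) 1) 0 0 = 0 then (-1:ℤˣ) else 1) = -1
      rw [if_pos]
      simp [mat_antidiagGL]

lemma sgn_ker [NeZero ℓ] (hNs : (Ns : Set (GL2 ℓ)) = Paper.NsSet ℓ) (hp : ℓ.Prime) : (sgn hNs hp).ker = (Cs ℓ).subgroupOf Ns := by
  ext ⟨g, hg⟩
  rw [MonoidHom.mem_ker, Subgroup.mem_subgroupOf]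
  show (if mat g 0 0 = 0 then (-1:ℤˣ) else 1) = 1 ↔ _
  constructor
  · intro h
    by_cases h0 : mat g 0 0 = 0
    · rw [if_pos h0] at h
      exact absurd h (by decide)
    · exact diag_of_mem hNs hg h0
  · intro h
    rw [if_neg (diag_ne_zero hp.one_lt h.1 h.2)]

lemma card_Ns [NeZero ℓ] (hNs : (Ns : Set (GL2 ℓ)) = Paper.NsSet ℓ) (hp : ℓ.Prime) : Nat.card Ns = 2 * ((ℓ - 1) * (ℓ - 1)) := by
  haveI : NeZero ℓ := ⟨hp.ne_zero⟩
  have hle : Cs ℓ ≤ Ns := by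
    intro g hg
    rw [mem_Ns_iff hNs]
    exact Or.inl ⟨hg.1, hg.2⟩
  have h1 : ((Cs ℓ).subgroupOf Ns).index * Nat.card ((Cs ℓ).subgroupOf Ns) = Nat.card Ns :=
    Subgroup.index_mul_card _
  have h2 : Nat.card ((Cs ℓ).subgroupOf Ns) = Nat.card (Cs ℓ) :=
    Nat.card_congr (Subgroup.subgroupOfEquivOfLe hle).toEquiv
  have h3 : ((Cs ℓ).subgroupOf Ns).index = 2 := by
    rw [← sgn_ker hNs hp, Subgroup.index_ker,
      MonoidHom.range_eq_top.2 (sgn_surjective hNs hp)]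
    rw [Nat.card_congr Subgroup.topEquiv.toEquiv, Nat.card_eq_fintype_card,
      Fintype.card_units_int]
  rw [← h1, h2, h3, card_Cs hp]

end Ns

section Chi
variable (hp : ℓ.Prime) (hl3 : 2 < ℓ)

lemma neg_one_ne_one' (hl3 : 2 < ℓ) : (-1 : ZMod ℓ) ≠ 1 := by
  haveI : Fact (2 < ℓ) := ⟨hl3⟩
  exact ZMod.neg_one_ne_one

/-- the character of `Gs` with kernel `Hs` -/
def chi (hp : ℓ.Prime) (hl3 : 2 < ℓ) : Gs ℓ →* ℤˣ where
  toFun g := if mat (g : GL2 ℓ) 1 1 = 1 then 1 else -1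
  map_one' := by
    show (if mat ((1 : Gs ℓ) : GL2 ℓ) 1 1 = 1 then (1:ℤˣ) else -1) = 1
    rw [if_pos]
    show mat (1 : GL2 ℓ) 1 1 = 1
    rw [mat_one]
    simp [Matrix.one_apply]
  map_mul' := by
    haveI : Fact ℓ.Prime := ⟨hp⟩
    have hne := neg_one_ne_one' hl3
    rintro ⟨g, g01, g10, g11⟩ ⟨h, h01, h10, h11⟩
    show (if mat (g*h) 1 1 = 1 then (1:ℤˣ) else -1) =
      (if mat g 1 1 = 1 then (1:ℤˣ) else -1) * (if mat h 1 1 = 1 then (1:ℤˣ) else -1)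
    have e : mat (g*h) 1 1 = mat g 1 1 * mat h 1 1 := by
      rw [entry_mul, g10, zero_mul, zero_add]
    rcases mul_self_eq_one_iff.1 g11 with hg | hg <;>
      rcases mul_self_eq_one_iff.1 h11 with hh | hh <;>
        rw [e, hg, hh] <;> simp [hne, hne.symm]
  
lemma chi_ker (hp : ℓ.Prime) (hl3 : 2 < ℓ) :
    (chi hp hl3).ker = (Hs ℓ).subgroupOf (Gs ℓ) := by
  ext ⟨g, g01, g10, g11⟩
  rw [MonoidHom.mem_ker, Subgroup.mem_subgroupOf]
  show (if mat g 1 1 = 1 then (1:ℤˣ) else -1) = 1 ↔ _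
  constructor
  · intro h
    by_cases h1 : mat g 1 1 = 1
    · exact ⟨g01, g10, h1⟩
    · rw [if_neg h1] at h
      exact absurd h (by decide)
  · rintro ⟨-, -, h1⟩
    rw [if_pos h1]

lemma chi_surjective [NeZero ℓ] (hp : ℓ.Prime) (hl3 : 2 < ℓ) :
    Function.Surjective (chi hp hl3) := by
  intro u
  rcases Int.units_eq_one_or u with rfl | rfl
  · exact ⟨1, (chi hp hl3).map_one⟩
  · refine ⟨⟨diagGL 1 (-1), ?_, ?_, ?_⟩, ?_⟩
    · simp [mat_diagGL]
    · simp [mat_diagGL]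
    · show ((-1 : (ZMod ℓ)ˣ) : ZMod ℓ) * ((-1 : (ZMod ℓ)ˣ) : ZMod ℓ) = 1
      simp
    · show (if mat (diagGL (1 : (ZMod ℓ)ˣ) (-1)) 1 1 = 1 then (1:ℤˣ) else -1) = -1
      rw [if_neg]
      show ¬ (((-1 : (ZMod ℓ)ˣ) : ZMod ℓ) = 1)
      simpa using neg_one_ne_one' hl3

lemma relindex_Hs_Gs [NeZero ℓ] (hp : ℓ.Prime) (hl3 : 2 < ℓ) :
    (Hs ℓ).relIndex (Gs ℓ) = 2 := by
  show ((Hs ℓ).subgroupOf (Gs ℓ)).index = 2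
  rw [← chi_ker hp hl3, Subgroup.index_ker,
    MonoidHom.range_eq_top.2 (chi_surjective hp hl3),
    Nat.card_congr Subgroup.topEquiv.toEquiv, Nat.card_eq_fintype_card,
    Fintype.card_units_int]

lemma Hs_le_Gs : Hs ℓ ≤ Gs ℓ := by
  rintro g ⟨g01, g10, g11⟩
  exact ⟨g01, g10, by rw [g11, one_mul]⟩

lemma card_Gs (hp : ℓ.Prime) (hl3 : 2 < ℓ) : Nat.card (Gs ℓ) = 2 * (ℓ - 1) := by
  haveI : NeZero ℓ := ⟨hp.ne_zero⟩
  have h1 : ((Hs ℓ).subgroupOf (Gs ℓ)).index * Nat.card ((Hs ℓ).subgroupOf (Gs ℓ)) =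
      Nat.card (Gs ℓ) := Subgroup.index_mul_card _
  have h2 : Nat.card ((Hs ℓ).subgroupOf (Gs ℓ)) = Nat.card (Hs ℓ) :=
    Nat.card_congr (Subgroup.subgroupOfEquivOfLe Hs_le_Gs).toEquiv
  have h3 : ((Hs ℓ).subgroupOf (Gs ℓ)).index = 2 := relindex_Hs_Gs hp hl3
  rw [← h1, h2, card_Hs hp, h3]

lemma neg_one_mem_Gs : (-1 : GL2 ℓ) ∈ Gs ℓ := by
  refine ⟨?_, ?_, ?_⟩ <;> rw [mat_neg_one] <;> simp [Matrix.one_apply]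

lemma neg_one_not_mem_Hs (hl3 : 2 < ℓ) : (-1 : GL2 ℓ) ∉ Hs ℓ := by
  rintro ⟨-, -, h⟩
  rw [mat_neg_one] at h
  simp [Matrix.one_apply] at h
  exact neg_one_ne_one' hl3 h

end Chi

section Det

lemma two_ne_zero' (hp : ℓ.Prime) (hl3 : 2 < ℓ) : (2 : ZMod ℓ) ≠ 0 := by
  intro h
  rw [show ((2 : ZMod ℓ)) = ((2 : ℕ) : ZMod ℓ) by norm_cast,
    ZMod.natCast_eq_zero_iff] at h
  exact absurd (Nat.le_of_dvd two_pos h) (by omega)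

lemma vec_comp_zero (hp : ℓ.Prime) (hl3 : 2 < ℓ) {x : ZMod ℓ} (h : x = -x) : x = 0 := by
  haveI : Fact ℓ.Prime := ⟨hp⟩
  have h2 : (2 : ZMod ℓ) * x = 0 := by rw [two_mul]; nth_rewrite 1 [h]; ring
  rcases mul_eq_zero.1 h2 with h' | h'
  · exact absurd h' (two_ne_zero' hp hl3)
  · exact h'

lemma fix_det_eq_one (hp : ℓ.Prime) (hl3 : 2 < ℓ) {g : GL2 ℓ} {v : Fin 2 → ZMod ℓ}
    (hv : v ≠ 0) (hfix : Matrix.mulVec (mat g) v = v)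
    (hgNs : (mat g 0 1 = 0 ∧ mat g 1 0 = 0) ∨ (mat g 0 0 = 0 ∧ mat g 1 1 = 0))
    (hdet : (mat g).det = 1) : g = 1 := by
  haveI : Fact ℓ.Prime := ⟨hp⟩
  have e0 : mat g 0 0 * v 0 + mat g 0 1 * v 1 = v 0 := by
    have := congrFun hfix 0
    simpa [Matrix.mulVec, dotProduct, Fin.sum_univ_two] using this
  have e1 : mat g 1 0 * v 0 + mat g 1 1 * v 1 = v 1 := by
    have := congrFun hfix 1
    simpa [Matrix.mulVec, dotProduct, Fin.sum_univ_two] using this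
  rw [Matrix.det_fin_two] at hdet
  rcases hgNs with ⟨g01, g10⟩ | ⟨g00, g11⟩
  · rw [g01, g10, mul_zero, sub_zero] at hdet
    rw [g01, zero_mul, add_zero] at e0
    rw [g10, zero_mul, zero_add] at e1
    have hv01 : v 0 ≠ 0 ∨ v 1 ≠ 0 := by
      by_contra h
      push_neg at h
      exact hv (funext fun i => by fin_cases i <;> simp [h.1, h.2])
    have key : mat g 0 0 = 1 ∧ mat g 1 1 = 1 := by
      rcases hv01 with h | h
      · have h00 : mat g 0 0 = 1 := by
          have := mul_right_cancel₀ h (e0.trans (one_mul (v 0)).symm)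
          exact this
        refine ⟨h00, ?_⟩
        rw [h00, one_mul] at hdet
        exact hdet
      · have h11 : mat g 1 1 = 1 := by
          have := mul_right_cancel₀ h (e1.trans (one_mul (v 1)).symm)
          exact this
        refine ⟨?_, h11⟩
        rw [h11, mul_one] at hdet
        exact hdet
    apply Units.ext
    show mat g = mat (1 : GL2 ℓ)
    rw [mat_one]
    ext i j
    fin_cases i <;> fin_cases j <;> simp [g01, g10, key.1, key.2, Matrix.one_apply]
  · exfalso
    rw [g00, g11, zero_mul, zero_sub] at hdet
    have hmul : mat g 0 1 * mat g 1 0 = -1 := by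
      have := congrArg Neg.neg hdet
      rw [neg_neg] at this
      rw [this]
    rw [g00, zero_mul, zero_add] at e0
    rw [g11, zero_mul, add_zero] at e1
    have hv1 : v 1 = 0 := by
      apply vec_comp_zero hp hl3
      calc v 1 = mat g 1 0 * (mat g 0 1 * v 1) := by rw [e0, e1]
        _ = (mat g 0 1 * mat g 1 0) * v 1 := by ring
        _ = -(v 1) := by rw [hmul]; ring
    have hv0 : v 0 = 0 := by rw [← e0, hv1, mul_zero]
    exact hv (funext fun i => by fin_cases i <;> simp [hv0, hv1])

lemma card_fix_dvd (hp : ℓ.Prime) (hl3 : 2 < ℓ) {Ns H : Subgroup (GL2 ℓ)}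
    (hNs : (Ns : Set (GL2 ℓ)) = Paper.NsSet ℓ) (hH : H ≤ Ns)
    {v : Fin 2 → ZMod ℓ} (hv : v ≠ 0)
    (hfix : ∀ h ∈ H, Matrix.mulVec (mat h) v = v) : Nat.card H ∣ ℓ - 1 := by
  haveI : NeZero ℓ := ⟨hp.ne_zero⟩
  haveI : Fact ℓ.Prime := ⟨hp⟩
  set d : H →* (ZMod ℓ)ˣ :=
    (Matrix.GeneralLinearGroup.det (n := Fin 2) (R := ZMod ℓ)).comp H.subtype with hd
  have hinj : Function.Injective d := by
    rw [← MonoidHom.ker_eq_bot_iff]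
    rw [Subgroup.eq_bot_iff_forall]
    rintro ⟨h, hh⟩ hker
    have hdet : (mat h).det = 1 := congrArg Units.val hker
    have hm := (mem_Ns_iff hNs).1 (hH hh)
    exact Subtype.ext (fix_det_eq_one hp hl3 hv (hfix h hh) hm hdet)
  have h1 : Nat.card H = Nat.card d.range :=
    Nat.card_congr (MonoidHom.ofInjective hinj).toEquiv
  rw [h1]
  have h2 : Nat.card d.range ∣ Nat.card (ZMod ℓ)ˣ := Subgroup.card_subgroup_dvd_card _
  rwa [Nat.card_eq_fintype_card (α := (ZMod ℓ)ˣ), ZMod.card_units] at h2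

end Det

lemma Gs_mem_char {g : GL2 ℓ} (hg : g ∈ Gs ℓ) : mat g 0 1 = 0 ∧ mat g 1 0 = 0 := ⟨hg.1, hg.2.1⟩

lemma sup_Gs_eq : Gs ℓ ⊔ Subgroup.closure {(-1 : GL2 ℓ)} = Gs ℓ :=
  sup_eq_left.2 ((Subgroup.closure_le _).2 (Set.singleton_subset_iff.2 neg_one_mem_Gs))

lemma fixes_Hs : ∀ h ∈ Hs ℓ, Matrix.mulVec (mat h) ![0, 1] = ![0, 1] := by
  rintro h ⟨h01, h10, h11⟩
  funext i
  fin_cases i <;>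
    simp [Matrix.mulVec, dotProduct, Fin.sum_univ_two, h01, h10, h11]

lemma neg_one_mem_Ns {Ns : Subgroup (GL2 ℓ)} (hNs : (Ns : Set (GL2 ℓ)) = Paper.NsSet ℓ) :
    (-1 : GL2 ℓ) ∈ Ns := by
  rw [mem_Ns_iff hNs]
  left
  constructor <;> rw [mat_neg_one] <;> simp [Matrix.one_apply]

theorem main (ℓ' : ℕ) (hℓ : Nat.Prime ℓ') (hodd : Odd ℓ')
    (Ns : Subgroup (GL2 ℓ')) (hNs : (Ns : Set (GL2 ℓ')) = Paper.NsSet ℓ') :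
    (∃ G H : Subgroup (GL2 ℓ'), G ≤ Ns ∧ Paper.TwistOf G H ∧ Paper.FixesVec H ∧
      G.relIndex Ns = ℓ' - 1) ∧
    (∀ G H : Subgroup (GL2 ℓ'), G ≤ Ns → Paper.TwistOf G H → Paper.FixesVec H →
      (ℓ' - 1) ∣ G.relIndex Ns) := by
  haveI : NeZero ℓ' := ⟨hℓ.ne_zero⟩
  have hl3 : 2 < ℓ' := by
    have h1 := hℓ.two_le
    have h2 := Nat.odd_iff.1 hodd
    omega
  have hGsNs : Gs ℓ' ≤ Ns := by
    intro g hg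
    rw [mem_Ns_iff hNs]
    exact Or.inl ⟨hg.1, hg.2.1⟩
  have hcardNs : Nat.card Ns = 2 * ((ℓ' - 1) * (ℓ' - 1)) := card_Ns hNs hℓ
  constructor
  · refine ⟨Gs ℓ', Hs ℓ', hGsNs, ?_, ?_, ?_⟩
    · right
      rw [sup_Gs_eq]
      exact ⟨Hs_le_Gs, relindex_Hs_Gs hℓ hl3, neg_one_not_mem_Hs hl3⟩
    · refine ⟨![0, 1], ?_, fixes_Hs⟩
      haveI : Fact (1 < ℓ') := ⟨by omega⟩
      intro h
      have := congrFun h 1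
      simp at this
    · have h1 : ((Gs ℓ').subgroupOf Ns).index * Nat.card ((Gs ℓ').subgroupOf Ns) =
          Nat.card Ns := Subgroup.index_mul_card _
      have h2 : Nat.card ((Gs ℓ').subgroupOf Ns) = Nat.card (Gs ℓ') :=
        Nat.card_congr (Subgroup.subgroupOfEquivOfLe hGsNs).toEquiv
      rw [h2, card_Gs hℓ hl3, hcardNs] at h1
      show ((Gs ℓ').subgroupOf Ns).index = ℓ' - 1
      have hpos : 0 < 2 * (ℓ' - 1) := by omega
      apply Nat.eq_of_mul_eq_mul_right hpos
      rw [h1]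
      ring
  · rintro G H hGNs htw ⟨v, hv, hfix⟩
    have hKNs : G ⊔ Subgroup.closure {(-1 : GL2 ℓ')} ≤ Ns :=
      sup_le hGNs ((Subgroup.closure_le _).2
        (Set.singleton_subset_iff.2 (neg_one_mem_Ns hNs)))
    rcases htw with rfl | ⟨hHK, hrel, hneg⟩
    · exfalso
      have hmem : (-1 : GL2 ℓ') ∈ G ⊔ Subgroup.closure {(-1 : GL2 ℓ')} :=
        Subgroup.mem_sup_right (Subgroup.subset_closure rfl)
      have := hfix _ hmem
      rw [mat_neg_one, Matrix.neg_mulVec, Matrix.one_mulVec] at this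
      apply hv
      funext i
      exact vec_comp_zero hℓ hl3 ((congrFun this i).symm)
    · have hcardH : Nat.card H ∣ ℓ' - 1 :=
        card_fix_dvd hℓ hl3 hNs (hHK.trans hKNs) hv hfix
      have hcardK : Nat.card (G ⊔ Subgroup.closure {(-1 : GL2 ℓ')} : Subgroup (GL2 ℓ')) =
          2 * Nat.card H := by
        have h1 := Subgroup.index_mul_card
          (H.subgroupOf (G ⊔ Subgroup.closure {(-1 : GL2 ℓ')}))
        have h2 : Nat.card (H.subgroupOf (G ⊔ Subgroup.closure {(-1 : GL2 ℓ')})) =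
            Nat.card H := Nat.card_congr (Subgroup.subgroupOfEquivOfLe hHK).toEquiv
        have h3 : (H.subgroupOf (G ⊔ Subgroup.closure {(-1 : GL2 ℓ')})).index = 2 := hrel
        rw [← h1, h2, h3]
      have hdvd : Nat.card G ∣ 2 * (ℓ' - 1) := by
        calc Nat.card G ∣ Nat.card (G ⊔ Subgroup.closure {(-1 : GL2 ℓ')} : Subgroup (GL2 ℓ')) :=
              Subgroup.card_dvd_of_le le_sup_left
          _ ∣ 2 * (ℓ' - 1) := by rw [hcardK]; exact mul_dvd_mul_left 2 hcardH
      obtain ⟨k, hk⟩ := hdvd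
      have h1 : (G.subgroupOf Ns).index * Nat.card (G.subgroupOf Ns) = Nat.card Ns :=
        Subgroup.index_mul_card _
      have h2 : Nat.card (G.subgroupOf Ns) = Nat.card G :=
        Nat.card_congr (Subgroup.subgroupOfEquivOfLe hGNs).toEquiv
      rw [h2, hcardNs] at h1
      refine ⟨k, ?_⟩
      show (G.subgroupOf Ns).index = (ℓ' - 1) * k
      have hpos : 0 < 2 * (ℓ' - 1) := by omega
      apply Nat.eq_of_mul_eq_mul_right hpos
      calc (G.subgroupOf Ns).index * (2 * (ℓ' - 1))
          = (G.subgroupOf Ns).index * (Nat.card G * k) := by rw [hk]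
        _ = ((G.subgroupOf Ns).index * Nat.card G) * k := by ring
        _ = (2 * ((ℓ' - 1) * (ℓ' - 1))) * k := by rw [h1]
        _ = (ℓ' - 1) * k * (2 * (ℓ' - 1)) := by ring

end Aux18

theorem statement_18 (ℓ : ℕ) (hℓ : Nat.Prime ℓ) (hodd : Odd ℓ)
    (Ns : Subgroup (GL2 ℓ)) (hNs : (Ns : Set (GL2 ℓ)) = Paper.NsSet ℓ) :
    (∃ G H : Subgroup (GL2 ℓ), G ≤ Ns ∧ Paper.TwistOf G H ∧ Paper.FixesVec H ∧
      G.relIndex Ns = ℓ - 1) ∧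
    (∀ G H : Subgroup (GL2 ℓ), G ≤ Ns → Paper.TwistOf G H → Paper.FixesVec H →
      (ℓ - 1) ∣ G.relIndex Ns) :=
  Aux18.main ℓ hℓ hodd Ns hNs
end

section
/- Let ℓ be an odd prime. Consider the set S of indices [N_ns(ℓ) : G] over subgroups G of N_ns(ℓ) such that some twist of G fixes a nonzero vector of (ℤ/ℓℤ)². Then (ℓ²−1)/2 belongs to S, and every element of S is divisible by (ℓ²−1)/2; that is, the set of div-minimal elements of S is {(ℓ²−1)/2}. -/
open Matrix

namespace Stmt19Aux

open Paper

section Basic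
variable {ℓ : ℕ} [Fact ℓ.Prime]

lemma aniso {ε : ZMod ℓ} (hε : ∀ t : ZMod ℓ, t ^ 2 ≠ ε) {x y : ZMod ℓ}
    (h : x ^ 2 - ε * y ^ 2 = 0) : x = 0 ∧ y = 0 := by
  by_cases hy : y = 0
  · subst hy
    refine ⟨?_, rfl⟩
    have hx2 : x ^ 2 = 0 := by linear_combination h
    exact pow_eq_zero_iff (two_ne_zero) |>.mp hx2
  · exfalso
    apply hε (x * y⁻¹)
    field_simp
    linear_combination h

lemma zmod_two_ne_zero (hodd : Odd ℓ) : (2 : ZMod ℓ) ≠ 0 := by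
  have h2 : ¬ ((ℓ : ℕ) ∣ 2) := by
    intro h
    have hp : ℓ.Prime := Fact.out
    have : ℓ = 2 := (Nat.prime_dvd_prime_iff_eq hp Nat.prime_two).mp h
    simp_all [Nat.odd_iff]
  intro h
  have : ((2 : ℕ) : ZMod ℓ) = 0 := by exact_mod_cast h
  rw [ZMod.natCast_eq_zero_iff] at this
  exact h2 this

lemma zmod_neg_one_ne_one (hodd : Odd ℓ) : (-1 : ZMod ℓ) ≠ 1 := by
  intro h
  apply zmod_two_ne_zero hodd
  linear_combination -h

lemma gdet_ne (g : GL2 ℓ) : (mat g).det ≠ 0 := by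
  have h : (mat g).det * (mat ↑g⁻¹).det = 1 := by
    rw [← Matrix.det_mul, mat, mat, Units.mul_inv, Matrix.det_one]
  intro h0
  rw [h0, zero_mul] at h
  exact zero_ne_one h

end Basic

section W
variable (ℓ : ℕ)

def wM : Matrix (Fin 2) (Fin 2) (ZMod ℓ) := !![1,0;0,-1]

lemma wM_mul_self : wM ℓ * wM ℓ = 1 := by
  rw [wM, Matrix.mul_fin_two]
  norm_num
  rw [← Matrix.one_fin_two]

def wU : GL2 ℓ := ⟨wM ℓ, wM ℓ, wM_mul_self ℓ, wM_mul_self ℓ⟩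

lemma wU_mul_self : wU ℓ * wU ℓ = 1 := by
  ext : 1
  exact wM_mul_self ℓ

def G4 : Subgroup (GL2 ℓ) where
  carrier := {1, -1, wU ℓ, -(wU ℓ)}
  one_mem' := Or.inl rfl
  mul_mem' := by
    rintro a b (rfl|rfl|rfl|rfl) (rfl|rfl|rfl|rfl) <;>
      simp [wU_mul_self, Set.mem_insert_iff, neg_neg, mul_neg, neg_mul]
  inv_mem' := by
    have hw : (wU ℓ)⁻¹ = wU ℓ := inv_eq_of_mul_eq_one_left (wU_mul_self ℓ)
    rintro a (rfl|rfl|rfl|rfl) <;>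
      simp [Set.mem_insert_iff, hw]

def H2 : Subgroup (GL2 ℓ) where
  carrier := {1, wU ℓ}
  one_mem' := Or.inl rfl
  mul_mem' := by
    rintro a b (rfl|rfl) (rfl|rfl) <;> simp [wU_mul_self, Set.mem_insert_iff]
  inv_mem' := by
    rintro a (rfl|rfl)
    · simp
    · right
      simp only [Set.mem_singleton_iff]
      exact inv_eq_of_mul_eq_one_left (wU_mul_self ℓ)

lemma mem_G4 {g : GL2 ℓ} : g ∈ G4 ℓ ↔ (g = 1 ∨ g = -1 ∨ g = wU ℓ ∨ g = -(wU ℓ)) := Iff.rfl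

lemma mem_H2 {g : GL2 ℓ} : g ∈ H2 ℓ ↔ (g = 1 ∨ g = wU ℓ) := Iff.rfl

end W

section Distinct
variable {ℓ : ℕ} [Fact ℓ.Prime] (hme : (-1 : ZMod ℓ) ≠ 1)
include hme

lemma d1 : (1 : GL2 ℓ) ≠ -1 := by
  intro h
  rw [Units.ext_iff, ← Matrix.ext_iff] at h
  have := h 0 0
  simp at this
  exact hme this.symm

lemma d2 : (1 : GL2 ℓ) ≠ wU ℓ := by
  intro h
  rw [Units.ext_iff, ← Matrix.ext_iff] at h
  have := h 1 1
  simp [wU, wM] at this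
  exact hme this.symm

lemma d3 : (1 : GL2 ℓ) ≠ -(wU ℓ) := by
  intro h
  rw [Units.ext_iff, ← Matrix.ext_iff] at h
  have := h 0 0
  simp [wU, wM] at this
  exact hme this.symm

lemma d4 : (-1 : GL2 ℓ) ≠ wU ℓ := by
  intro h
  rw [Units.ext_iff, ← Matrix.ext_iff] at h
  have := h 0 0
  simp [wU, wM] at this
  exact hme this

lemma d5 : (-1 : GL2 ℓ) ≠ -(wU ℓ) := by
  intro h
  rw [Units.ext_iff, ← Matrix.ext_iff] at h
  have := h 1 1
  simp [wU, wM] at this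
  exact hme this

lemma d6 : wU ℓ ≠ -(wU ℓ) := by
  intro h
  rw [Units.ext_iff, ← Matrix.ext_iff] at h
  have := h 0 0
  simp [wU, wM] at this
  exact hme this.symm

lemma cardG4 : Nat.card ↥(G4 ℓ) = 4 := by
  have h : Nat.card ↥(G4 ℓ) = Nat.card ↥({1, -1, wU ℓ, -(wU ℓ)} : Set (GL2 ℓ)) := rfl
  rw [h, Nat.card_coe_set_eq,
    Set.ncard_insert_of_notMem (by simp [d1 hme, d2 hme, d3 hme]),
    Set.ncard_insert_of_notMem (by simp [d4 hme, d5 hme]),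
    Set.ncard_pair (d6 hme)]

lemma cardH2 : Nat.card ↥(H2 ℓ) = 2 := by
  have h : Nat.card ↥(H2 ℓ) = Nat.card ↥({1, wU ℓ} : Set (GL2 ℓ)) := rfl
  rw [h, Nat.card_coe_set_eq, Set.ncard_pair (d2 hme)]

end Distinct

section Count
variable {ℓ : ℕ} [Fact ℓ.Prime] {ε : ZMod ℓ}

/-- the matrix for a parameter point -/
def nnsMat (ε : ZMod ℓ) (b : Bool) (p : ZMod ℓ × ZMod ℓ) : Matrix (Fin 2) (Fin 2) (ZMod ℓ) :=
  if b then !![p.1, -(ε * p.2); p.2, -p.1] else !![p.1, ε * p.2; p.2, p.1]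

lemma nnsMat_det_ne (hε : ∀ t : ZMod ℓ, t ^ 2 ≠ ε) (b : Bool) (p : ZMod ℓ × ZMod ℓ)
    (hp : p ≠ 0) : (nnsMat ε b p).det ≠ 0 := by
  intro h
  apply hp
  have hd : p.1 ^ 2 - ε * p.2 ^ 2 = 0 := by
    cases b <;>
      simp only [nnsMat, if_true, if_false, Matrix.det_fin_two_of, Bool.false_eq_true] at h
    · linear_combination h
    · linear_combination -h
  obtain ⟨h1, h2⟩ := aniso hε hd
  simp [Prod.ext_iff, h1, h2]

noncomputable def nnsFun (hε : ∀ t : ZMod ℓ, t ^ 2 ≠ ε) :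
    Bool × {p : ZMod ℓ × ZMod ℓ // p ≠ 0} → ↥(NnsSet ℓ ε) := fun bp =>
  ⟨Matrix.GeneralLinearGroup.mkOfDetNeZero (nnsMat ε bp.1 bp.2.1)
      (nnsMat_det_ne hε bp.1 bp.2.1 bp.2.2), by
    rcases bp with ⟨b, ⟨p, hp⟩⟩
    cases b
    · exact Or.inl ⟨p.1, p.2, rfl⟩
    · exact Or.inr ⟨p.1, p.2, rfl⟩⟩

lemma nnsFun_bijective (hodd : Odd ℓ) (hε : ∀ t : ZMod ℓ, t ^ 2 ≠ ε) :
    Function.Bijective (nnsFun hε) := by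
  have hε0 : ε ≠ 0 := fun h => hε 0 (by simp [h])
  have h2 : (2 : ZMod ℓ) ≠ 0 := zmod_two_ne_zero hodd
  constructor
  · rintro ⟨b, ⟨p, hp⟩⟩ ⟨b', ⟨p', hp'⟩⟩ h
    have hm : nnsMat ε b p = nnsMat ε b' p' :=
      congrArg Units.val (congrArg Subtype.val h)
    have h00 := congrFun (congrFun hm 0) 0
    have h10 := congrFun (congrFun hm 1) 0
    have h01 := congrFun (congrFun hm 0) 1
    have h11 := congrFun (congrFun hm 1) 1
    cases b <;> cases b' <;> simp only [nnsMat, Bool.false_eq_true, if_true, if_false,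
        reduceIte] at h00 h10 h01 h11 <;>
      simp only [Matrix.cons_val', Matrix.cons_val_zero, Matrix.cons_val_one, Matrix.head_cons,
        Matrix.empty_val', Matrix.cons_val_fin_one, Matrix.head_fin_const, Matrix.of_apply]
        at h00 h10 h01 h11
    · exact Prod.ext rfl (Subtype.ext (Prod.ext_iff.mpr ⟨h00, h10⟩))
    · exfalso
      apply hp'
      have hx : p'.1 = 0 := by
        have h2x : (2 : ZMod ℓ) * p'.1 = 0 := by linear_combination h11 - h00
        exact (mul_eq_zero.mp h2x).resolve_left h2
      have hy : p'.2 = 0 := by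
        have h2y : (2 : ZMod ℓ) * (ε * p'.2) = 0 := by linear_combination h01 - ε * h10
        rcases mul_eq_zero.mp h2y with h' | h'
        · exact absurd h' h2
        · exact (mul_eq_zero.mp h').resolve_left hε0
      exact Prod.ext_iff.mpr ⟨hx, hy⟩
    · exfalso
      apply hp
      have hx : p.1 = 0 := by
        have h2x : (2 : ZMod ℓ) * p.1 = 0 := by linear_combination h00 - h11
        exact (mul_eq_zero.mp h2x).resolve_left h2
      have hy : p.2 = 0 := by
        have h2y : (2 : ZMod ℓ) * (ε * p.2) = 0 := by linear_combination -h01 + ε * h10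
        rcases mul_eq_zero.mp h2y with h' | h'
        · exact absurd h' h2
        · exact (mul_eq_zero.mp h').resolve_left hε0
      exact Prod.ext_iff.mpr ⟨hx, hy⟩
    · exact Prod.ext rfl (Subtype.ext (Prod.ext_iff.mpr ⟨h00, h10⟩))
  · rintro ⟨g, hg⟩
    have hdg := gdet_ne g
    rcases hg with ⟨x, y, hm⟩ | ⟨x, y, hm⟩
    · have hp : ((x, y) : ZMod ℓ × ZMod ℓ) ≠ 0 := by
        rintro h
        rw [Prod.ext_iff] at h
        obtain ⟨h1, h2'⟩ := h
        simp only at h1 h2'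
        rw [hm, h1, h2'] at hdg
        simp [Matrix.det_fin_two_of] at hdg
      refine ⟨(false, ⟨(x, y), hp⟩), ?_⟩
      apply Subtype.ext
      apply Units.ext
      exact hm.symm
    · have hp : ((x, y) : ZMod ℓ × ZMod ℓ) ≠ 0 := by
        rintro h
        rw [Prod.ext_iff] at h
        obtain ⟨h1, h2'⟩ := h
        simp only at h1 h2'
        rw [hm, h1, h2'] at hdg
        simp [Matrix.det_fin_two_of] at hdg
      refine ⟨(true, ⟨(x, y), hp⟩), ?_⟩
      apply Subtype.ext
      apply Units.ext
      exact hm.symm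

lemma card_nzpairs : Nat.card {p : ZMod ℓ × ZMod ℓ // p ≠ 0} = ℓ ^ 2 - 1 := by
  haveI : NeZero ℓ := ⟨(Fact.out : ℓ.Prime).ne_zero⟩
  rw [Nat.card_eq_fintype_card]
  have h : Fintype.card {p : ZMod ℓ × ZMod ℓ // ¬ (p = 0)} =
      Fintype.card (ZMod ℓ × ZMod ℓ) - Fintype.card {p : ZMod ℓ × ZMod ℓ // p = 0} :=
    Fintype.card_subtype_compl _
  rw [h, Fintype.card_subtype_eq, Fintype.card_prod, ZMod.card, sq]

lemma card_nns (hodd : Odd ℓ) (hε : ∀ t : ZMod ℓ, t ^ 2 ≠ ε) :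
    Nat.card ↥(NnsSet ℓ ε) = 2 * (ℓ ^ 2 - 1) := by
  rw [← Nat.card_congr (Equiv.ofBijective _ (nnsFun_bijective hodd hε)),
    Nat.card_prod, card_nzpairs, Nat.card_eq_fintype_card, Fintype.card_bool]

end Count

section Fix
variable {ℓ : ℕ} [Fact ℓ.Prime] {ε : ZMod ℓ}

lemma fix_cns (hε : ∀ t : ZMod ℓ, t ^ 2 ≠ ε) {g : GL2 ℓ} (hg : g ∈ CnsSet ℓ ε)
    {v : Fin 2 → ZMod ℓ} (hv : v ≠ 0) (hfix : Matrix.mulVec (mat g) v = v) : g = 1 := by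
  obtain ⟨x, y, hm⟩ := hg
  rw [hm] at hfix
  have e1 : (x - 1) * v 0 + ε * y * v 1 = 0 := by
    have := congrFun hfix 0
    simp [Matrix.mulVec, dotProduct, Fin.sum_univ_two] at this
    linear_combination this
  have e2 : y * v 0 + (x - 1) * v 1 = 0 := by
    have := congrFun hfix 1
    simp [Matrix.mulVec, dotProduct, Fin.sum_univ_two] at this
    linear_combination this
  have hd : (x - 1) ^ 2 - ε * y ^ 2 = 0 := by
    have hv' : v 0 ≠ 0 ∨ v 1 ≠ 0 := by
      by_contra hc
      push_neg at hc
      apply hv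
      funext i
      fin_cases i <;> simp [hc.1, hc.2]
    have ha : ((x - 1) ^ 2 - ε * y ^ 2) * v 0 = 0 := by
      linear_combination (x - 1) * e1 - ε * y * e2
    have hb : ((x - 1) ^ 2 - ε * y ^ 2) * v 1 = 0 := by
      linear_combination (-y) * e1 + (x - 1) * e2
    rcases hv' with h | h
    · exact (mul_eq_zero.mp ha).resolve_right h
    · exact (mul_eq_zero.mp hb).resolve_right h
  obtain ⟨hx, hy⟩ := aniso hε hd
  have hx1 : x = 1 := by linear_combination hx
  apply Units.ext
  show mat g = 1
  rw [hm, hx1, hy]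
  ext i j
  fin_cases i <;> fin_cases j <;> simp

lemma coset_mul {g1 g2 : GL2 ℓ}
    (h1 : ∃ x y : ZMod ℓ, mat g1 = !![x, -(ε * y); y, -x])
    (h2 : ∃ x y : ZMod ℓ, mat g2 = !![x, -(ε * y); y, -x]) :
    g1 * g2 ∈ CnsSet ℓ ε := by
  obtain ⟨x, y, hm1⟩ := h1
  obtain ⟨x', y', hm2⟩ := h2
  refine ⟨x * x' - ε * (y * y'), y * x' - x * y', ?_⟩
  show (↑(g1 * g2) : Matrix (Fin 2) (Fin 2) (ZMod ℓ)) = _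
  rw [Units.val_mul]
  show mat g1 * mat g2 = _
  rw [hm1, hm2, Matrix.mul_fin_two]
  ext i j
  fin_cases i <;> fin_cases j <;> simp <;> ring

end Fix

lemma card_mul_relindex {Γ : Type*} [Group Γ] (G K : Subgroup Γ) (h : G ≤ K) :
    Nat.card ↥G * G.relIndex K = Nat.card ↥K := by
  have h1 := Subgroup.card_mul_index (G.subgroupOf K)
  rwa [Nat.card_congr (Subgroup.subgroupOfEquivOfLe h).toEquiv] at h1

section Mem
variable {ℓ : ℕ} (ε : ZMod ℓ)

lemma one_mem_nns : (1 : GL2 ℓ) ∈ NnsSet ℓ ε := by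
  refine Or.inl ⟨1, 0, ?_⟩
  show (↑(1 : GL2 ℓ) : Matrix (Fin 2) (Fin 2) (ZMod ℓ)) = _
  ext i j
  fin_cases i <;> fin_cases j <;> simp

lemma neg_one_mem_nns : (-1 : GL2 ℓ) ∈ NnsSet ℓ ε := by
  refine Or.inl ⟨-1, 0, ?_⟩
  show (↑(-1 : GL2 ℓ) : Matrix (Fin 2) (Fin 2) (ZMod ℓ)) = _
  rw [Units.val_neg, Units.val_one]
  ext i j
  fin_cases i <;> fin_cases j <;> simp

lemma wU_mem_nns : wU ℓ ∈ NnsSet ℓ ε := by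
  refine Or.inr ⟨1, 0, ?_⟩
  show (↑(wU ℓ) : Matrix (Fin 2) (Fin 2) (ZMod ℓ)) = _
  show wM ℓ = _
  rw [wM]
  ext i j
  fin_cases i <;> fin_cases j <;> simp

lemma neg_wU_mem_nns : -(wU ℓ) ∈ NnsSet ℓ ε := by
  refine Or.inr ⟨-1, 0, ?_⟩
  show (↑(-(wU ℓ)) : Matrix (Fin 2) (Fin 2) (ZMod ℓ)) = _
  rw [Units.val_neg]
  show -(wM ℓ) = _
  rw [wM]
  ext i j
  fin_cases i <;> fin_cases j <;> simp

end Mem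

end Stmt19Aux

theorem statement_19 (ℓ : ℕ) (hℓ : Nat.Prime ℓ) (hodd : Odd ℓ) (ε : ZMod ℓ)
    (hε : ∀ t : ZMod ℓ, t ^ 2 ≠ ε)
    (Nns : Subgroup (GL2 ℓ)) (hNns : (Nns : Set (GL2 ℓ)) = Paper.NnsSet ℓ ε) :
    (∃ G H : Subgroup (GL2 ℓ), G ≤ Nns ∧ Paper.TwistOf G H ∧ Paper.FixesVec H ∧
      G.relIndex Nns = (ℓ ^ 2 - 1) / 2) ∧
    (∀ G H : Subgroup (GL2 ℓ), G ≤ Nns → Paper.TwistOf G H → Paper.FixesVec H →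
      (ℓ ^ 2 - 1) / 2 ∣ G.relIndex Nns) := by
  classical
  haveI : Fact ℓ.Prime := ⟨hℓ⟩
  haveI : NeZero ℓ := ⟨hℓ.ne_zero⟩
  open Stmt19Aux in
  have hme : (-1 : ZMod ℓ) ≠ 1 := zmod_neg_one_ne_one hodd
  have h2div : 2 ∣ ℓ ^ 2 - 1 := by
    obtain ⟨k, hk⟩ := hodd
    have h : ℓ ^ 2 = 4 * k ^ 2 + 4 * k + 1 := by rw [hk]; ring
    omega
  have hm2 : ℓ ^ 2 - 1 = 2 * ((ℓ ^ 2 - 1) / 2) := (Nat.mul_div_cancel' h2div).symm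
  have hcardNns : Nat.card ↥Nns = 2 * (ℓ ^ 2 - 1) := by
    have h : Nat.card ↥Nns = Nat.card ↥(Paper.NnsSet ℓ ε) := by
      rw [← SetLike.coe_sort_coe, hNns]
    rw [h, Stmt19Aux.card_nns hodd hε]
  have hmemNns : ∀ g : GL2 ℓ, g ∈ Paper.NnsSet ℓ ε → g ∈ Nns := by
    intro g hg
    rw [← SetLike.mem_coe, hNns]
    exact hg
  have hmemNns' : ∀ g : GL2 ℓ, g ∈ Nns → g ∈ Paper.NnsSet ℓ ε := by
    intro g hg
    rw [← hNns]
    exact hg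
  constructor
  · -- existence
    have hG4le : Stmt19Aux.G4 ℓ ≤ Nns := by
      intro g hg
      rcases (Stmt19Aux.mem_G4 ℓ).mp hg with rfl | rfl | rfl | rfl
      · exact hmemNns _ (Stmt19Aux.one_mem_nns ε)
      · exact hmemNns _ (Stmt19Aux.neg_one_mem_nns ε)
      · exact hmemNns _ (Stmt19Aux.wU_mem_nns ε)
      · exact hmemNns _ (Stmt19Aux.neg_wU_mem_nns ε)
    have hsup : Stmt19Aux.G4 ℓ ⊔ Subgroup.closure {(-1 : GL2 ℓ)} = Stmt19Aux.G4 ℓ :=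
      sup_eq_left.mpr ((Subgroup.closure_le _).mpr
        (Set.singleton_subset_iff.mpr ((Stmt19Aux.mem_G4 ℓ).mpr (Or.inr (Or.inl rfl)))))
    have hH2le : Stmt19Aux.H2 ℓ ≤ Stmt19Aux.G4 ℓ := by
      intro g hg
      rcases (Stmt19Aux.mem_H2 ℓ).mp hg with rfl | rfl
      · exact one_mem _
      · exact (Stmt19Aux.mem_G4 ℓ).mpr (Or.inr (Or.inr (Or.inl rfl)))
    refine ⟨Stmt19Aux.G4 ℓ, Stmt19Aux.H2 ℓ, hG4le, Or.inr ⟨?_, ?_, ?_⟩, ?_, ?_⟩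
    · rw [hsup]
      exact hH2le
    · rw [hsup]
      have h1 := Stmt19Aux.card_mul_relindex (Stmt19Aux.H2 ℓ) (Stmt19Aux.G4 ℓ) hH2le
      rw [Stmt19Aux.cardH2 hme, Stmt19Aux.cardG4 hme] at h1
      omega
    · intro hmem
      rcases (Stmt19Aux.mem_H2 ℓ).mp hmem with h | h
      · exact Stmt19Aux.d1 hme h.symm
      · exact Stmt19Aux.d4 hme h
    · refine ⟨![1, 0], ?_, ?_⟩
      · intro h
        have := congrFun h 0
        simp at this
      · intro h hh
        rcases (Stmt19Aux.mem_H2 ℓ).mp hh with rfl | rfl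
        · rw [show Paper.mat (1 : GL2 ℓ) = (1 : Matrix (Fin 2) (Fin 2) (ZMod ℓ)) from rfl,
            Matrix.one_mulVec]
        · funext i
          fin_cases i <;>
            simp [Paper.mat, Stmt19Aux.wU, Stmt19Aux.wM, Matrix.mulVec, dotProduct,
              Fin.sum_univ_two]
    · have h1 := Stmt19Aux.card_mul_relindex (Stmt19Aux.G4 ℓ) Nns hG4le
      rw [Stmt19Aux.cardG4 hme, hcardNns] at h1
      omega
  · -- divisibility
    intro G H hG htw hfix
    obtain ⟨v, hv, hfixv⟩ := hfix
    have hnegNns : (-1 : GL2 ℓ) ∈ Nns := hmemNns _ (Stmt19Aux.neg_one_mem_nns ε)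
    have hG'le : G ⊔ Subgroup.closure {(-1 : GL2 ℓ)} ≤ Nns :=
      sup_le hG ((Subgroup.closure_le _).mpr (Set.singleton_subset_iff.mpr hnegNns))
    have hHle : H ≤ G ⊔ Subgroup.closure {(-1 : GL2 ℓ)} := by
      rcases htw with h | ⟨h, _, _⟩
      · rw [h]
      · exact h
    have hHNns : ∀ h : GL2 ℓ, h ∈ H → h ∈ Paper.NnsSet ℓ ε := fun h hh =>
      hmemNns' _ (hG'le (hHle hh))
    have key : ∀ h : GL2 ℓ, h ∈ H → h ∈ Paper.CnsSet ℓ ε → h = 1 := fun h hh hc =>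
      Stmt19Aux.fix_cns hε hc hv (hfixv h hh)
    have hH2 : Nat.card ↥H ∣ 2 := by
      have hfinj : Function.Injective
          (fun h : ↥H => decide ((h : GL2 ℓ) ∈ Paper.CnsSet ℓ ε)) := by
        intro a b hab
        simp only [decide_eq_decide] at hab
        by_cases hac : (a : GL2 ℓ) ∈ Paper.CnsSet ℓ ε
        · have hbc := hab.mp hac
          exact Subtype.ext ((key _ a.2 hac).trans (key _ b.2 hbc).symm)
        · have hbc : (b : GL2 ℓ) ∉ Paper.CnsSet ℓ ε := fun h => hac (hab.mpr h)
          have ca : ∃ x y : ZMod ℓ, Paper.mat (a : GL2 ℓ) = !![x, -(ε * y); y, -x] :=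
            (hHNns _ a.2).resolve_left hac
          have cb : ∃ x y : ZMod ℓ, Paper.mat (b : GL2 ℓ) = !![x, -(ε * y); y, -x] :=
            (hHNns _ b.2).resolve_left hbc
          have haa : (a : GL2 ℓ) * a = 1 :=
            key _ (mul_mem a.2 a.2) (Stmt19Aux.coset_mul ca ca)
          have hab1 : (a : GL2 ℓ) * b = 1 :=
            key _ (mul_mem a.2 b.2) (Stmt19Aux.coset_mul ca cb)
          exact Subtype.ext (mul_left_cancel (haa.trans hab1.symm))
      have hle : Nat.card ↥H ≤ 2 := by
        have := Nat.card_le_card_of_injective _ hfinj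
        simpa using this
      have hpos : 0 < Nat.card ↥H := Nat.card_pos
      interval_cases h : Nat.card ↥H
      · exact one_dvd 2
      · exact dvd_rfl
    have hG'4 : Nat.card ↥(G ⊔ Subgroup.closure {(-1 : GL2 ℓ)} : Subgroup (GL2 ℓ)) ∣ 4 := by
      rcases htw with h | ⟨hle, hrel, _⟩
      · rw [← h]
        exact hH2.trans (by norm_num)
      · have h1 := Stmt19Aux.card_mul_relindex H _ hle
        rw [hrel] at h1
        rw [← h1]
        exact mul_dvd_mul hH2 dvd_rfl
    have hG4 : Nat.card ↥G ∣ 4 :=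
      (Subgroup.card_dvd_of_le le_sup_left).trans hG'4
    have heq : Nat.card ↥G * G.relIndex Nns = 2 * (ℓ ^ 2 - 1) := by
      rw [Stmt19Aux.card_mul_relindex G Nns hG, hcardNns]
    obtain ⟨t, ht⟩ := hG4
    have hkpos : 0 < Nat.card ↥G := Nat.card_pos
    refine ⟨t, ?_⟩
    apply Nat.eq_of_mul_eq_mul_left hkpos
    rw [heq]
    conv_lhs => rw [hm2]
    rw [show 2 * (2 * ((ℓ ^ 2 - 1) / 2)) = 4 * ((ℓ ^ 2 - 1) / 2) by ring, ht]
    ring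
end
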